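/- For any ideal I in a local ring (R, m) and any natural number m, the (m+1)-th jet closure of I is contained in the m-th jet closure of I, i.e. I^{(m+1)-jc} ⊆ I^{m-jc}. -/

import Mathlib

open Polynomial

/-- The truncated polynomial ring `A[t]/(t^(m+1))`. -/
abbrev JetTrunc (A : Type) [CommRing A] (m : ℕ) : Type :=
  Polynomial A ⧸ (Ideal.span {(X : Polynomial A) ^ (m + 1)} : Ideal (Polynomial A))

/-- The image of the variable `t` in `A[t]/(t^(m+1))`. -/
noncomputable def jetT (A : Type) [CommRing A] (m : ℕ) : JetTrunc A m :=
  Ideal.Quotient.mk _ (X : Polynomial A)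

/-- A test datum for the `m`-th jet closure of an ideal `I` of a local `k`-algebra `(R, 𝔪)`:
a `k`-algebra `A` together with a `k`-algebra map `φ : R → A[t]/(t^(m+1))` killing `I`
and sending the maximal ideal `𝔪` into `(t)` (i.e. an `A`-point of the scheme of local
`m`-jets of `Spec (R/I)` over the closed point). -/
structure JetTest (k : Type) [CommRing k] {R : Type} [CommRing R] [Algebra k R]
    (𝔪 : Ideal R) (m : ℕ) (I : Ideal R) where
  A : Type
  [instCommRing : CommRing A]
  [instAlgebra : Algebra k A]
  φ : R →ₐ[k] JetTrunc A m
  ker_I : ∀ f ∈ I, φ f = 0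
  max_to_t : ∀ f ∈ 𝔪, φ f ∈ Ideal.span {jetT A m}

attribute [instance] JetTest.instCommRing JetTest.instAlgebra

/-- The `m`-th jet closure `I^{m-jc}` of an ideal `I` in a local `k`-algebra `(R, 𝔪)`:
the intersection of the kernels of all jet test maps (functor-of-points description of the
kernel of `μ_m : R → R_m[t]/(t^(m+1), I_m, 𝔪^e)`). -/
noncomputable def jetClosure (k : Type) [CommRing k] {R : Type} [CommRing R] [Algebra k R]
    (𝔪 : Ideal R) (m : ℕ) (I : Ideal R) : Ideal R :=
  sInf { J : Ideal R | ∃ T : JetTest k 𝔪 m I, J = RingHom.ker T.φ }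

noncomputable instance jetTruncCommRing (A : Type) [CommRing A] (m : ℕ) : CommRing (JetTrunc A m) :=
  Ideal.Quotient.commRing _

section Aux

variable (k : Type) [CommRing k] (A : Type) [CommRing A] [Algebra k A] (m : ℕ)

/-- constants embedding -/
noncomputable def jetConst : A →ₐ[k] JetTrunc A m :=
  (Ideal.Quotient.mkₐ k _).comp CAlgHom

lemma jetT_pow : (jetT A m) ^ (m + 1) = 0 := by
  show (Ideal.Quotient.mk _ (X : Polynomial A)) ^ (m+1) = 0
  rw [← map_pow, Ideal.Quotient.eq_zero_iff_mem]
  exact Ideal.subset_span rfl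

/-- coefficients of evaluation at C b * X -/
lemma coeff_eval₂_C_mul_X {A B : Type} [CommRing A] [CommRing B] (f : A →+* B) (b : B)
    (p : Polynomial A) (j : ℕ) :
    (p.eval₂ ((C : B →+* Polynomial B).comp f) (C b * X)).coeff j = f (p.coeff j) * b ^ j := by
  rw [eval₂_eq_sum, Polynomial.sum_def, finset_sum_coeff]
  rw [Finset.sum_eq_single j]
  · rw [RingHom.comp_apply, mul_pow, ← C_pow, ← mul_assoc, ← C_mul, coeff_C_mul, coeff_X_pow,
      if_pos rfl, mul_one]
  · intro e he hne
    rw [RingHom.comp_apply, mul_pow, ← C_pow, ← mul_assoc, ← C_mul, coeff_C_mul, coeff_X_pow,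
      if_neg (Ne.symm hne), mul_zero]
  · intro hj
    simp [Polynomial.notMem_support_iff.mp hj]

/-- the inclusion A[t]/t^{m+1} → B[s]/s^{m+2}, B = A[t]/t^{m+1}, t ↦ t s. -/
noncomputable def jetIncl : JetTrunc A m →ₐ[k] JetTrunc (JetTrunc A m) (m + 1) :=
  Ideal.Quotient.liftₐ _
    (aevalTower ((jetConst k (JetTrunc A m) (m + 1)).comp (jetConst k A m))
      (jetConst k (JetTrunc A m) (m + 1) (jetT A m) * jetT (JetTrunc A m) (m + 1)))
    (by
      intro p hp
      rw [Ideal.mem_span_singleton] at hp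
      obtain ⟨q, rfl⟩ := hp
      rw [map_mul, map_pow, aevalTower_X, mul_pow, ← map_pow, jetT_pow,
        map_zero, zero_mul, zero_mul])

end Aux

lemma jetIncl_inj (k : Type) [CommRing k] (A : Type) [CommRing A] [Algebra k A] (m : ℕ) (x : JetTrunc A m) (h : jetIncl k A m x = 0) : x = 0 := by
  obtain ⟨p, rfl⟩ := Ideal.Quotient.mk_surjective x
  have key : jetIncl k A m (Ideal.Quotient.mk _ p)
      = Ideal.Quotient.mk _ (p.eval₂
          ((C : JetTrunc A m →+* Polynomial (JetTrunc A m)).comp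
            ((Ideal.Quotient.mk _).comp (C : A →+* Polynomial A)))
          (C (jetT A m) * X)) := by
    rw [jetIncl, Ideal.Quotient.liftₐ_apply]
    show Polynomial.eval₂ _ _ p = _
    rw [hom_eval₂]
    rfl
  rw [key, Ideal.Quotient.eq_zero_iff_mem, Ideal.mem_span_singleton] at h
  rw [X_pow_dvd_iff] at h
  rw [Ideal.Quotient.eq_zero_iff_mem, Ideal.mem_span_singleton, X_pow_dvd_iff]
  intro d hd
  have h2 := h d (lt_trans hd (Nat.lt_succ_self _))
  rw [coeff_eval₂_C_mul_X] at h2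
  have h3 : (Ideal.Quotient.mk (Ideal.span {(X : Polynomial A) ^ (m + 1)}))
      (C (p.coeff d) * X ^ d) = 0 := by
    rw [map_mul, map_pow]; exact h2
  rw [Ideal.Quotient.eq_zero_iff_mem, Ideal.mem_span_singleton, X_pow_dvd_iff] at h3
  have := h3 d hd
  rwa [coeff_C_mul, coeff_X_pow, if_pos rfl, mul_one] at this


noncomputable def jetTestSucc {k : Type} [CommRing k] {R : Type} [CommRing R] [Algebra k R]
    {𝔪 : Ideal R} {m : ℕ} {I : Ideal R} (T : JetTest k 𝔪 m I) : JetTest k 𝔪 (m + 1) I where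
  A := JetTrunc T.A m
  φ := (jetIncl k T.A m).comp T.φ
  ker_I := fun f hf => by simp [AlgHom.comp_apply, T.ker_I f hf]
  max_to_t := fun f hf => by
    have h1 := T.max_to_t f hf
    rw [Ideal.mem_span_singleton] at h1 ⊢
    obtain ⟨c, hc⟩ := h1
    refine ⟨(jetIncl k T.A m) c * jetConst k (JetTrunc T.A m) (m+1) (jetT T.A m), ?_⟩
    rw [AlgHom.comp_apply, hc, map_mul]
    have hX : jetIncl k T.A m (jetT T.A m)
        = jetConst k (JetTrunc T.A m) (m+1) (jetT T.A m) * jetT (JetTrunc T.A m) (m+1) := by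
      rw [jetIncl]
      show Ideal.Quotient.liftₐ _ _ _ (Ideal.Quotient.mk _ (X : Polynomial T.A)) = _
      rw [Ideal.Quotient.liftₐ_apply]
      exact aevalTower_X _ _
    rw [hX]; ring

lemma jetTestSucc_φ {k : Type} [CommRing k] {R : Type} [CommRing R] [Algebra k R]
    {𝔪 : Ideal R} {m : ℕ} {I : Ideal R} (T : JetTest k 𝔪 m I) (f : R) :
    (jetTestSucc T).φ f = jetIncl k T.A m (T.φ f) := rfl

/-- For any ideal `I` in a local ring `(R, 𝔪)` and any `m : ℕ`,
`I^{(m+1)-jc} ⊆ I^{m-jc}`. -/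
theorem jetClosure_succ_le_jetClosure (k : Type) [Field k] [CharZero k]
    (R : Type) [CommRing R] [Algebra k R] [IsLocalRing R] (I : Ideal R) (m : ℕ) :
    jetClosure k (IsLocalRing.maximalIdeal R) (m + 1) I ≤
      jetClosure k (IsLocalRing.maximalIdeal R) m I := by
  rw [jetClosure, jetClosure]
  refine le_sInf ?_
  rintro J ⟨T, rfl⟩
  refine le_trans (sInf_le ⟨jetTestSucc T, rfl⟩) ?_
  intro f hf
  rw [RingHom.mem_ker] at hf ⊢
  rw [jetTestSucc_φ] at hf
  exact jetIncl_inj k T.A m _ hf
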